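/- Equality in the sharp Sobolev inequality on ℝ^d (d ≥ 3) is achieved by the function g(x) = (1 + |x|²)^{-(d-2)/2}; that is, ∫ |∇g|² dx = S_d (∫ |g|^{2d/(d-2)} dx)^{(d-2)/d}. -/

import Mathlib

open MeasureTheory Real

open Set

noncomputable def sobolevConst (d : ℕ) : ℝ :=
  Real.pi * d * (d - 2) * (Real.Gamma (d / 2) / Real.Gamma d) ^ ((2 : ℝ) / d)

/-- The Aubin-Talenti function. -/
noncomputable def aubinTalenti (d : ℕ) (x : EuclideanSpace ℝ (Fin d)) : ℝ :=
  (1 + ‖x‖ ^ 2) ^ (-((d : ℝ) - 2) / 2)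

lemma beta_Ioo {u v : ℝ} (hu : 0 < u) (hv : 0 < v) :
    ∫ t in Ioo (0:ℝ) 1, t ^ (u-1) * (1-t) ^ (v-1) = Gamma u * Gamma v / Gamma (u+v) := by
  have key : Complex.betaIntegral u v = ((∫ t in Ioo (0:ℝ) 1, t ^ (u-1) * (1-t) ^ (v-1) : ℝ) : ℂ) := by
    rw [Complex.betaIntegral]
    rw [show (∫ t in Ioo (0:ℝ) 1, t ^ (u-1) * (1-t) ^ (v-1))
        = ∫ t in (0:ℝ)..1, t ^ (u-1) * (1-t) ^ (v-1) by
      rw [intervalIntegral.integral_of_le zero_le_one, integral_Ioc_eq_integral_Ioo]]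
    rw [← intervalIntegral.integral_ofReal]
    refine intervalIntegral.integral_congr (fun x hx => ?_)
    rw [uIcc_of_le zero_le_one] at hx
    rw [Complex.ofReal_mul, Complex.ofReal_cpow hx.1 (u-1), Complex.ofReal_cpow (by linarith [hx.2] : (0:ℝ) ≤ 1 - x) (v-1)]
    push_cast
    ring
  have h := Complex.Gamma_mul_Gamma_eq_betaIntegral
    (s := (u:ℂ)) (t := (v:ℂ)) (by simpa using hu) (by simpa using hv)
  rw [key] at h
  rw [show ((u:ℂ)+v) = ((u+v:ℝ):ℂ) by push_cast; ring, Complex.Gamma_ofReal,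
    Complex.Gamma_ofReal, Complex.Gamma_ofReal] at h
  have h3 : Gamma u * Gamma v
      = Gamma (u+v) * ∫ t in Ioo (0:ℝ) 1, t ^ (u-1) * (1-t) ^ (v-1) := by exact_mod_cast h
  have hG : Gamma (u+v) ≠ 0 := (Gamma_pos_of_pos (by linarith)).ne'
  field_simp
  linarith [h3]

lemma beta_Ioi {u v : ℝ} (hu : 0 < u) (hv : 0 < v) :
    ∫ x in Ioi (0:ℝ), x ^ (u-1) * (1+x) ^ (-(u+v)) = Gamma u * Gamma v / Gamma (u+v) := by
  have himg : (fun t : ℝ => t/(1-t)) '' Ioo 0 1 = Ioi 0 := by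
    ext y
    constructor
    · rintro ⟨t, ht, rfl⟩
      exact div_pos ht.1 (by linarith [ht.2])
    · intro hy
      refine ⟨y/(1+y), ⟨div_pos hy (by linarith [mem_Ioi.mp hy]), ?_⟩, ?_⟩
      · rw [div_lt_one (by linarith [mem_Ioi.mp hy])]; linarith [mem_Ioi.mp hy]
      · have h1 : (0:ℝ) < 1 + y := by linarith [mem_Ioi.mp hy]
        field_simp
        ring
  have hderiv : ∀ t ∈ Ioo (0:ℝ) 1,
      HasDerivWithinAt (fun t : ℝ => t/(1-t)) (((1-t)^2)⁻¹) (Ioo 0 1) t := by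
    intro t ht
    have h1 : (1:ℝ) - t ≠ 0 := by simp only [mem_Ioo] at ht; intro h; linarith
    have := (hasDerivAt_id t).div ((hasDerivAt_const t 1).sub (hasDerivAt_id t)) h1
    refine this.hasDerivWithinAt.congr_deriv ?_
    simp only [id, Pi.sub_apply]
    field_simp
    ring
  have hinj : InjOn (fun t : ℝ => t/(1-t)) (Ioo 0 1) := by
    intro a ha b hb hab
    simp only [mem_Ioo] at ha hb
    have h1 : (1:ℝ) - a ≠ 0 := by intro h; linarith
    have h2 : (1:ℝ) - b ≠ 0 := by intro h; linarith
    field_simp at hab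
    linarith
  have := integral_image_eq_integral_abs_deriv_smul measurableSet_Ioo hderiv hinj
    (fun x => x ^ (u-1) * (1+x) ^ (-(u+v)))
  rw [himg] at this
  rw [this, ← beta_Ioo hu hv]
  refine setIntegral_congr_fun measurableSet_Ioo (fun t ht => ?_)
  simp only [mem_Ioo] at ht
  have hs : (0:ℝ) < 1 - t := by linarith
  have h1t : (0:ℝ) < 1 + t/(1-t) := by have := div_pos ht.1 hs; linarith
  have key : 1 + t/(1-t) = (1-t)⁻¹ := by field_simp; ring
  rw [smul_eq_mul, key]
  have e1 : |((1-t)^2)⁻¹| = (1-t) ^ (-2:ℝ) := by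
    rw [abs_of_pos (by positivity), ← rpow_natCast (1-t) 2, ← rpow_neg hs.le]
    norm_num
  have e2 : (t/(1-t)) ^ (u-1) = t ^ (u-1) * (1-t) ^ (-(u-1)) := by
    rw [div_rpow ht.1.le hs.le, div_eq_mul_inv, ← rpow_neg hs.le]
  have e3 : ((1-t)⁻¹) ^ (-(u+v)) = (1-t) ^ (u+v) := by
    rw [inv_rpow hs.le, ← rpow_neg hs.le, neg_neg]
  rw [e1, e2, e3]
  calc (1-t)^(-2:ℝ) * (t^(u-1) * (1-t)^(-(u-1)) * (1-t)^(u+v))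
      = t^(u-1) * ((1-t)^(-2:ℝ) * ((1-t)^(-(u-1)) * (1-t)^(u+v))) := by ring
    _ = t^(u-1) * (1-t)^(v-1) := by
        rw [← rpow_add hs, ← rpow_add hs, show (-2:ℝ) + (-(u-1) + (u+v)) = v - 1 by ring]

lemma radial_int {a b : ℝ} (ha : 0 < a) (hab : a < b) :
    ∫ x in Ioi (0:ℝ), x ^ (2*a-1) * (1 + x^2) ^ (-b)
      = Gamma a * Gamma (b-a) / (2 * Gamma b) := by
  have h2 : (2:ℝ) ≠ 0 := two_ne_zero
  have key := integral_comp_rpow_Ioi (fun y : ℝ => y ^ (a-1) * (1+y) ^ (-b)) h2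
  have congr1 : ∫ x in Ioi (0:ℝ), (|(2:ℝ)| * x ^ ((2:ℝ) - 1)) •
      ((x ^ (2:ℝ)) ^ (a-1) * (1 + x ^ (2:ℝ)) ^ (-b))
      = ∫ x in Ioi (0:ℝ), 2 * (x ^ (2*a-1) * (1 + x^2) ^ (-b)) := by
    refine setIntegral_congr_fun measurableSet_Ioi (fun x hx => ?_)
    have hx : (0:ℝ) < x := hx
    have hsq : x ^ (2:ℝ) = x ^ (2:ℕ) := by
      rw [show (2:ℝ) = ((2:ℕ):ℝ) by norm_num, rpow_natCast]
    have hmul : (x ^ (2:ℝ)) ^ (a-1) = x ^ (2*(a-1)) := by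
      rw [← rpow_mul hx.le]
    rw [smul_eq_mul, hmul, hsq, abs_of_pos (by norm_num : (0:ℝ) < 2),
      show (2:ℝ) - 1 = 1 by norm_num, rpow_one,
      show (2*a-1 : ℝ) = 1 + 2*(a-1) by ring, rpow_add hx, rpow_one]
    ring
  rw [congr1] at key
  rw [integral_const_mul] at key
  have hbeta := beta_Ioi ha (by linarith : (0:ℝ) < b - a)
  rw [show a + (b-a) = b by ring] at hbeta
  rw [hbeta] at key
  have hΓ : Gamma b ≠ 0 := (Gamma_pos_of_pos (lt_trans ha hab)).ne'
  field_simp at key ⊢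
  linarith

lemma euclidean_radial (d : ℕ) (hd : 3 ≤ d) (f : ℝ → ℝ) :
    ∫ x : EuclideanSpace ℝ (Fin d), f ‖x‖
      = (d * (Real.sqrt π ^ d / Gamma (d/2+1))) * ∫ y in Ioi (0:ℝ), y ^ (d-1) * f y := by
  haveI : Nonempty (Fin d) := ⟨⟨0, by omega⟩⟩
  have key := MeasureTheory.integral_fun_norm_addHaar
    (volume : Measure (EuclideanSpace ℝ (Fin d))) f
  have hdim : Module.finrank ℝ (EuclideanSpace ℝ (Fin d)) = d := finrank_euclideanSpace_fin
  rw [hdim] at key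
  have hball : (volume (Metric.ball (0 : EuclideanSpace ℝ (Fin d)) 1)).toReal
      = Real.sqrt π ^ d / Gamma (d/2+1) := by
    rw [EuclideanSpace.volume_ball, Fintype.card_fin, ENNReal.ofReal_one, one_pow, one_mul,
      ENNReal.toReal_ofReal]
    positivity
  rw [key, measureReal_def, hball, nsmul_eq_mul, smul_eq_mul, mul_assoc]
  simp only [smul_eq_mul]

lemma gradient_aubinTalenti (d : ℕ) (hd : 3 ≤ d) (x : EuclideanSpace ℝ (Fin d)) :
    gradient (aubinTalenti d) x
      = (-((d:ℝ)-2) * (1+‖x‖^2) ^ (-(d:ℝ)/2)) • x := by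
  set c : ℝ := -((d:ℝ)-2)/2 with hc
  have hpos : (0:ℝ) < 1 + ‖x‖^2 := by positivity
  have hq : HasFDerivAt (fun y : EuclideanSpace ℝ (Fin d) => 1 + ‖y‖^2)
      (2 • (innerSL ℝ x)) x :=
    ((hasStrictFDerivAt_norm_sq x).hasFDerivAt).const_add 1
  have hr : HasDerivAt (fun t : ℝ => t ^ c) (c * (1 + ‖x‖^2) ^ (c-1)) (1 + ‖x‖^2) :=
    Real.hasDerivAt_rpow_const (Or.inl hpos.ne')
  have hcomp : HasFDerivAt (aubinTalenti d)
      ((c * (1 + ‖x‖^2) ^ (c-1)) • (2 • (innerSL ℝ x))) x :=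
    by have := hr.comp_hasFDerivAt x hq; exact this
  have hgrad : HasGradientAt (aubinTalenti d)
      ((-((d:ℝ)-2) * (1+‖x‖^2) ^ (-(d:ℝ)/2)) • x) x := by
    rw [hasGradientAt_iff_hasFDerivAt]
    refine hcomp.congr_fderiv ?_
    ext y
    simp only [InnerProductSpace.toDual_apply_apply, ContinuousLinearMap.smul_apply,
      innerSL_apply_apply, smul_eq_mul, two_smul, ContinuousLinearMap.add_apply]
    rw [real_inner_smul_left]
    rw [hc]
    ring_nf
  exact hgrad.gradient

/-- Equality in the sharp Sobolev inequality on `ℝ^d` is achieved by the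
Aubin-Talenti function `g(x) = (1 + |x|²)^{-(d-2)/2}`. -/
theorem sobolev_equality_aubinTalenti (d : ℕ) (hd : 3 ≤ d) :
    ∫ x, ‖gradient (aubinTalenti d) x‖ ^ 2 =
      sobolevConst d *
        (∫ x, |aubinTalenti d x| ^ ((2 * d : ℝ) / ((d : ℝ) - 2))) ^
          (((d : ℝ) - 2) / d) := by
  set D : ℝ := (d : ℝ) with hD
  have hd3 : (3:ℝ) ≤ D := by rw [hD]; exact_mod_cast hd
  have hGd : 0 < Gamma D := Gamma_pos_of_pos (by linarith)
  have hG2 : 0 < Gamma (D/2) := Gamma_pos_of_pos (by linarith)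
  have hG21 : 0 < Gamma (D/2+1) := Gamma_pos_of_pos (by linarith)
  have hG2m : 0 < Gamma (D/2-1) := Gamma_pos_of_pos (by linarith)
  have hG21e : Gamma (D/2+1) = D/2 * Gamma (D/2) := Gamma_add_one (by linarith)
  have hG2e : Gamma (D/2) = (D/2-1) * Gamma (D/2-1) := by
    have := Gamma_add_one (s := D/2 - 1) (by intro h; rw [sub_eq_zero] at h; linarith)
    rw [sub_add_cancel] at this
    exact this
  have hsq : Real.sqrt π ^ d = π ^ (D/2) := by
    rw [← rpow_natCast (Real.sqrt π) d, sqrt_eq_rpow, ← rpow_mul pi_pos.le]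
    congr 1
    ring
  -- LHS computation
  have hL : ∫ x, ‖gradient (aubinTalenti d) x‖ ^ 2
      = D * (D-2) * (π ^ (D/2) * (Gamma (D/2) / Gamma D)) := by
    have hstep : (∫ x, ‖gradient (aubinTalenti d) x‖ ^ 2)
        = (d * (Real.sqrt π ^ d / Gamma (D/2+1))) *
            ∫ y in Ioi (0:ℝ), y ^ (d-1) * ((D-2) * (1+y^2) ^ (-D/2) * y)^2 :=
      calc (∫ x, ‖gradient (aubinTalenti d) x‖ ^ 2)
          = ∫ x : EuclideanSpace ℝ (Fin d),
              (fun r : ℝ => ((D-2) * (1+r^2) ^ (-D/2) * r)^2) ‖x‖ := by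
            congr 1
            ext x
            rw [gradient_aubinTalenti d hd x, norm_smul, Real.norm_eq_abs, abs_mul, abs_neg,
              abs_of_pos (by linarith : (0:ℝ) < D - 2),
              abs_of_pos (by positivity : (0:ℝ) < (1+‖x‖^2) ^ (-D/2))]
        _ = _ := euclidean_radial d hd (fun r : ℝ => ((D-2) * (1+r^2) ^ (-D/2) * r)^2)
    have hrad : (∫ y in Ioi (0:ℝ), y ^ (d-1) * ((D-2) * (1+y^2) ^ (-D/2) * y)^2)
        = (D-2)^2 * (Gamma (D/2+1) * Gamma (D/2-1) / (2 * Gamma D)) := by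
      rw [show (∫ y in Ioi (0:ℝ), y ^ (d-1) * ((D-2) * (1+y^2) ^ (-D/2) * y)^2)
          = ∫ y in Ioi (0:ℝ), (D-2)^2 * (y ^ (2*(D/2+1)-1) * (1+y^2) ^ (-D)) from
        setIntegral_congr_fun measurableSet_Ioi (fun y hy => ?_), integral_const_mul,
        radial_int (by linarith : (0:ℝ) < D/2+1) (by linarith : D/2+1 < D),
        show D - (D/2+1) = D/2 - 1 by ring]
      · have hy : (0:ℝ) < y := hy
        have hTsq : (((1+y^2:ℝ)) ^ (-D/2))^2 = (1+y^2) ^ (-D) := by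
          rw [← rpow_natCast ((1+y^2:ℝ) ^ (-D/2)) 2, ← rpow_mul (by positivity)]
          norm_num
        have hyp : y ^ (d-1) * y^2 = y ^ (2*(D/2+1)-1) := by
          rw [← pow_add, ← rpow_natCast y (d-1+2)]
          congr 1
          rw [Nat.cast_add, Nat.cast_sub (by omega : 1 ≤ d)]
          push_cast
          ring
        calc y ^ (d-1) * ((D-2) * (1+y^2) ^ (-D/2) * y)^2
            = (D-2)^2 * (((1+y^2) ^ (-D/2))^2 * (y ^ (d-1) * y^2)) := by ring
          _ = (D-2)^2 * (y ^ (2*(D/2+1)-1) * (1+y^2) ^ (-D)) := by rw [hTsq, hyp]; ring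
    rw [hstep, hrad, hsq, hG21e, hG2e]
    have h1 : D/2 - 1 ≠ 0 := by intro h; rw [sub_eq_zero] at h; linarith
    have hDne : D ≠ 0 := by linarith
    have key : ∀ p g1 g2 : ℝ, g1 ≠ 0 → g2 ≠ 0 →
        (d:ℝ) * (p / (D/2 * ((D/2-1) * g1))) *
          ((D-2)^2 * ((D/2 * ((D/2-1)*g1)) * g1 / (2*g2)))
          = D*(D-2)*(p * ((D/2-1)*g1 / g2)) := by
      intro p g1 g2 hg1 hg2
      rw [show ((d:ℝ)) = D from rfl]
      have hb : D/2 * ((D/2-1) * g1) ≠ 0 :=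
        mul_ne_zero (div_ne_zero hDne two_ne_zero) (mul_ne_zero h1 hg1)
      calc D * (p / (D/2 * ((D/2-1) * g1))) *
            ((D-2)^2 * ((D/2 * ((D/2-1)*g1)) * g1 / (2*g2)))
          = (D * p * ((D-2)^2 * g1/(2*g2))) *
              ((D/2 * ((D/2-1) * g1)) / (D/2 * ((D/2-1) * g1))) := by ring
        _ = D * p * ((D-2)^2 * g1 / (2*g2)) := by rw [div_self hb, mul_one]
        _ = D*(D-2)*(p * ((D/2-1)*g1 / g2)) := by ring
    exact key _ _ _ hG2m.ne' hGd.ne'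
  -- RHS base integral
  have hI : (∫ x, |aubinTalenti d x| ^ ((2 * d : ℝ) / ((d : ℝ) - 2)))
      = π ^ (D/2) * (Gamma (D/2) / Gamma D) := by
    have hcongr : (∫ x, |aubinTalenti d x| ^ ((2 * d : ℝ) / ((d : ℝ) - 2)))
        = ∫ x : EuclideanSpace ℝ (Fin d), (fun r : ℝ => (1+r^2) ^ (-D)) ‖x‖ := by
      congr 1
      ext x
      have hpos : (0:ℝ) < 1 + ‖x‖^2 := by positivity
      have h2 : D - 2 ≠ 0 := by intro h; rw [sub_eq_zero] at h; linarith
      rw [show aubinTalenti d x = (1 + ‖x‖^2) ^ (-(D-2)/2) from rfl,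
        abs_of_pos (rpow_pos_of_pos hpos _), ← rpow_mul hpos.le]
      congr 1
      rw [← hD]
      field_simp
    rw [hcongr, euclidean_radial d hd (fun r : ℝ => (1+r^2) ^ (-D))]
    have hrad : (∫ y in Ioi (0:ℝ), y ^ (d-1) * (1+y^2) ^ (-D))
        = Gamma (D/2) * Gamma (D/2) / (2 * Gamma D) := by
      rw [show (∫ y in Ioi (0:ℝ), y ^ (d-1) * (1+y^2) ^ (-D))
          = ∫ y in Ioi (0:ℝ), y ^ (2*(D/2)-1) * (1+y^2) ^ (-D) from
        setIntegral_congr_fun measurableSet_Ioi (fun y hy => ?_),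
        radial_int (by linarith : (0:ℝ) < D/2) (by linarith : D/2 < D),
        show D - D/2 = D/2 by ring]
      · congr 1
        rw [← rpow_natCast y (d-1)]
        congr 1
        rw [Nat.cast_sub (by omega : 1 ≤ d)]
        ring
    rw [hrad, hsq, hG21e]
    field_simp
    ring
  rw [hL, hI]
  have hR : 0 < Gamma (D/2) / Gamma D := by positivity
  rw [mul_rpow (by positivity) (by positivity)]
  have hDne : D ≠ 0 := by linarith
  have e1 : ((π : ℝ) ^ (D/2)) ^ ((D-2)/D) = π ^ ((D-2)/2) := by
    rw [← rpow_mul pi_pos.le]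
    congr 1
    field_simp
  have e2 : (Gamma (D/2)/Gamma D) ^ ((2:ℝ)/D) * (Gamma (D/2)/Gamma D) ^ ((D-2)/D)
      = Gamma (D/2)/Gamma D := by
    rw [← rpow_add hR, show (2:ℝ)/D + (D-2)/D = 1 by field_simp; ring, rpow_one]
  have e3 : π * π ^ ((D-2)/2) = π ^ (D/2) := by
    rw [show D/2 = 1 + (D-2)/2 by ring, rpow_add pi_pos, rpow_one]
  rw [e1, show sobolevConst d = π * D * (D-2) * (Gamma (D/2)/Gamma D) ^ ((2:ℝ)/D) from rfl]
  linear_combination (-(D*(D-2)*(Gamma (D/2)/Gamma D))) * e3 -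
    (D*(D-2)*π*(π ^ ((D-2)/2))) * e2
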